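/- arXiv:1806.04267 — 3 statements merged into one kernel-verified Lean document; each statement's English description precedes it below -/
import Mathlib

section
/- Let q ≥ 2 be an integer and let f : ℕ → ℂ be a strongly q-multiplicative sequence with |f(n)| = 1 for all n. Then either there exists an integer p with 0 ≤ p < q−1 such that f(n) = e(n·p/(q−1)) for all n ∈ ℕ, or there exist constants c > 0 and C > 0 such that for every integer N ≥ 1, sup_{α ∈ ℝ} |∑_{n=0}^{N−1} f(n) e(nα)| ≤ C·N^{1−c}. -/
open Finset Complex

noncomputable section

/-- A sequence is `q`-multiplicative if `f (m + n) = f m * f n` whenever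
`m < q ^ t` and `q ^ t ∣ n`. -/
def QMult (q : ℕ) (f : ℕ → ℂ) : Prop :=
  ∀ t m n : ℕ, m < q ^ t → q ^ t ∣ n → f (m + n) = f m * f n

/-- `e x = exp (2 π i x)`. -/
def e (x : ℝ) : ℂ := Complex.exp (2 * Real.pi * Complex.I * x)

/-- The weight `|ω|` of `ω ∈ {0,1}^s`: the number of coordinates equal to `1`. -/
def wt {s : ℕ} (ω : Fin s → Bool) : ℕ := (Finset.univ.filter fun i => ω i = true).card

/-- The vertex `n₀ + ω₁ n₁ + ⋯ + ω_s n_s` of a parallelepiped. -/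
def vertex (s : ℕ) (n : Fin (s + 1) → ℤ) (ω : Fin s → Bool) : ℤ :=
  n 0 + ∑ i : Fin s, if ω i then n i.succ else 0

/-- The set `Π_s(N)` of (s+1)-tuples all of whose associated vertices lie in `[0, N)`.
(Any such tuple automatically has all entries in `[-N, N]`.) -/
def PiSet (s N : ℕ) : Finset (Fin (s + 1) → ℤ) :=
  (Finset.Icc (fun _ => -(N : ℤ)) fun _ => (N : ℤ)).filter fun n =>
    ∀ ω : Fin s → Bool, 0 ≤ vertex s n ω ∧ vertex s n ω < N

/-- The Gowers product `∏_ω conj^{|ω|} f(n₀ + ω·n)`. -/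
def gowersTerm (s : ℕ) (f : ℕ → ℂ) (n : Fin (s + 1) → ℤ) : ℂ :=
  ∏ ω : Fin s → Bool, (starRingEnd ℂ)^[wt ω] (f (vertex s n ω).toNat)

/-- The Gowers average `‖f‖_{U^s[N]}^{2^s}` (as a complex number; it is in fact
real and nonnegative). -/
def gowersAvg (s N : ℕ) (f : ℕ → ℂ) : ℂ :=
  (∑ n ∈ PiSet s N, gowersTerm s f n) / (PiSet s N).card

/-- The Gowers uniformity norm `‖f‖_{U^s[N]}`. -/
def gowersNorm (s N : ℕ) (f : ℕ → ℂ) : ℝ :=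
  (gowersAvg s N f).re ^ ((1 : ℝ) / 2 ^ s)

/-- Sum of digits of `n` in base `q`. -/
def digitSum (q n : ℕ) : ℕ := (Nat.digits q n).sum

end

lemma e_add (x y : ℝ) : e (x + y) = e x * e y := by
  unfold e; rw [← Complex.exp_add]; congr 1; push_cast; ring

lemma e_abs (x : ℝ) : ‖e x‖ = 1 := by
  have h : (2 * (Real.pi:ℂ) * Complex.I * (x:ℂ)) = ((2*Real.pi*x : ℝ) : ℂ) * Complex.I := by
    push_cast; ring
  rw [e, h, Complex.norm_exp_ofReal_mul_I]

lemma e_zero : e 0 = 1 := by simp [e]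

lemma e_ne_zero (x : ℝ) : e x ≠ 0 := Complex.exp_ne_zero _

lemma e_eq_one_iff (x : ℝ) : e x = 1 ↔ ∃ k : ℤ, x = k := by
  rw [e, Complex.exp_eq_one_iff]
  constructor
  · rintro ⟨n, hn⟩
    refine ⟨n, ?_⟩
    have h2 : (2 * (Real.pi:ℂ) * Complex.I) * (x:ℂ) = (2 * (Real.pi:ℂ) * Complex.I) * (n:ℂ) := by
      rw [hn]; ring
    have := mul_left_cancel₀ Complex.two_pi_I_ne_zero h2
    exact_mod_cast this
  · rintro ⟨k, rfl⟩
    exact ⟨k, by push_cast; ring⟩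

lemma e_int (k : ℤ) : e k = 1 := (e_eq_one_iff _).2 ⟨k, rfl⟩

lemma e_congr {x y : ℝ} (k : ℤ) (h : x - y = k) : e x = e y := by
  have h2 : e x = e y * e (x - y) := by rw [← e_add]; ring_nf
  rw [h2, h, e_int, mul_one]

lemma unit_of_re_eq_one {w : ℂ} (h1 : ‖w‖ = 1) (h2 : w.re = 1) : w = 1 := by
  have hn : Complex.normSq w = 1 := by
    rw [← Complex.sq_norm, h1]; norm_num
  have him : w.im = 0 := by
    have h3 := Complex.normSq_apply w
    nlinarith [h3, hn, h2]
  exact Complex.ext (by simp [h2]) (by simp [him])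

lemma align (q : ℕ) (hq : 0 < q) (z : ℕ → ℂ)
    (hz : ∀ a, a < q → ‖z a‖ = 1) (h0 : z 0 = 1)
    (hsum : ‖∑ a ∈ Finset.range q, z a‖ = q) :
    ∀ a, a < q → z a = 1 := by
  set S := ∑ a ∈ Finset.range q, z a with hS
  set lam := (starRingEnd ℂ) S / q with hlam
  have hqR : ((q:ℝ)) ≠ 0 := Nat.cast_ne_zero.mpr hq.ne'
  have habs_lam : ‖lam‖ = 1 := by
    rw [hlam, norm_div, Complex.norm_conj, hsum, Complex.norm_natCast, div_self hqR]
  have hlamS : lam * S = ((q:ℝ) : ℂ) := by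
    rw [hlam, div_mul_eq_mul_div, mul_comm ((starRingEnd ℂ) S) S, Complex.mul_conj,
      Complex.normSq_eq_norm_sq, hsum]
    rw [sq]
    push_cast
    rw [mul_div_assoc, div_self (by exact_mod_cast hqR : ((q:ℕ):ℂ) ≠ 0), mul_one]
  have hsum_re : ∑ a ∈ Finset.range q, (lam * z a).re = q := by
    rw [← Complex.re_sum, ← Finset.mul_sum, ← hS, hlamS, Complex.ofReal_re]
  have hle : ∀ a ∈ Finset.range q, (lam * z a).re ≤ 1 := by
    intro a ha
    refine (Complex.re_le_norm _).trans ?_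
    rw [norm_mul, habs_lam, hz a (Finset.mem_range.mp ha), one_mul]
  have heq : ∀ a ∈ Finset.range q, (lam * z a).re = 1 := by
    by_contra hcon
    push_neg at hcon
    obtain ⟨a, ha, hne⟩ := hcon
    have hlt := Finset.sum_lt_sum hle ⟨a, ha, lt_of_le_of_ne (hle a ha) hne⟩
    rw [Finset.sum_const, Finset.card_range, nsmul_eq_mul, mul_one, hsum_re] at hlt
    exact lt_irrefl _ hlt
  have hlam1 : lam = 1 := by
    have h := unit_of_re_eq_one (w := lam * z 0)
      (by rw [norm_mul, habs_lam, hz 0 hq, mul_one])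
      (heq 0 (Finset.mem_range.mpr hq))
    rwa [h0, mul_one] at h
  intro a ha
  have h := unit_of_re_eq_one (w := lam * z a)
    (by rw [norm_mul, habs_lam, hz a ha, mul_one])
    (heq a (Finset.mem_range.mpr ha))
  rwa [hlam1, one_mul] at h

lemma sum_range_mul_sum (h : ℕ → ℂ) (q M : ℕ) :
    ∑ n ∈ Finset.range (q*M), h n = ∑ m ∈ Finset.range M, ∑ a ∈ Finset.range q, h (q*m + a) := by
  induction M with
  | zero => simp
  | succ M ih =>
    rw [Nat.mul_succ, Finset.sum_range_add, ih, Finset.sum_range_succ]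


set_option maxHeartbeats 2000000 in
/-- A strongly `q`-multiplicative sequence is either a periodic
linear phase `e(np/(q-1))` or of Gelfond type of order 1. -/
theorem stmt15 (q : ℕ) (hq : 2 ≤ q) (f : ℕ → ℂ) (hf : QMult q f)
    (hstrong : ∀ n : ℕ, f (q * n) = f n) (hmod : ∀ n, ‖f n‖ = 1) :
    (∃ p : ℕ, p < q - 1 ∧ ∀ n : ℕ, f n = e ((n : ℝ) * p / ((q : ℝ) - 1))) ∨
    ∃ c > (0 : ℝ), ∃ C > (0 : ℝ), ∀ N : ℕ, 1 ≤ N → ∀ α : ℝ,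
      ‖∑ n ∈ Finset.range N, f n * e (n * α)‖ ≤ C * (N : ℝ) ^ ((1 : ℝ) - c) := by
  have hq0 : 0 < q := by omega
  have hq1R : (1:ℝ) < (q:ℝ) := by exact_mod_cast hq
  have hqR0 : (0:ℝ) < (q:ℝ) := by positivity
  have hne0 : ∀ n, f n ≠ 0 := by
    intro n h0
    have := hmod n
    rw [h0] at this
    simp at this
  have hf0 : f 0 = 1 := by
    have h := hf 0 0 0 (by simp) (dvd_zero _)
    simp only [add_zero] at h
    have h1 : f 0 * 1 = f 0 * f 0 := by rw [mul_one]; exact h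
    exact (mul_left_cancel₀ (hne0 0) h1).symm
  have hsplit : ∀ a m : ℕ, a < q → f (q*m + a) = f a * f m := by
    intro a m ha
    have h := hf 1 a (q*m) (by simpa using ha) ⟨m, by rw [pow_one]⟩
    rw [hstrong m] at h
    rw [Nat.add_comm (q*m) a]
    exact h
  set g : ℝ → ℂ := fun β => ∑ a ∈ Finset.range q, f a * e ((a:ℝ)*β) with hgdef
  have habsg : ∀ β, ‖g β‖ ≤ (q:ℝ) := by
    intro β
    calc ‖g β‖ ≤ ∑ a ∈ Finset.range q, ‖f a * e ((a:ℝ)*β)‖ :=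
          norm_sum_le _ _
      _ = ∑ a ∈ Finset.range q, 1 := by
          apply Finset.sum_congr rfl; intro a _; rw [norm_mul, hmod, e_abs, mul_one]
      _ = (q:ℝ) := by simp
  have hrec : ∀ (N:ℕ) (β:ℝ), ‖∑ n ∈ Finset.range N, f n * e ((n:ℝ)*β)‖ ≤
      ‖g β‖ * ‖∑ m ∈ Finset.range (N/q), f m * e ((m:ℝ)*((q:ℝ)*β))‖
        + ((q:ℝ)-1) := by
    intro N β
    obtain ⟨M, r, hr, rfl⟩ : ∃ M r, r < q ∧ N = q*M + r :=
      ⟨N/q, N%q, Nat.mod_lt _ hq0, (Nat.div_add_mod N q).symm⟩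
    have hdiv : (q*M+r)/q = M := by
      rw [Nat.mul_add_div hq0, Nat.div_eq_of_lt hr, add_zero]
    rw [hdiv]
    have hsum : ∑ n ∈ Finset.range (q*M+r), f n * e ((n:ℝ)*β)
        = (g β) * (∑ m ∈ Finset.range M, f m * e ((m:ℝ)*((q:ℝ)*β)))
          + ∑ i ∈ Finset.range r, f (q*M+i) * e (((q*M+i : ℕ):ℝ)*β) := by
      rw [Finset.sum_range_add, sum_range_mul_sum]
      congr 1
      rw [hgdef, Finset.sum_mul_sum]
      rw [Finset.sum_comm]
      apply Finset.sum_congr rfl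
      intro b hb
      apply Finset.sum_congr rfl
      intro m _
      rw [hsplit b m (Finset.mem_range.mp hb)]
      rw [show (((q*m+b : ℕ)):ℝ)*β = (b:ℝ)*β + (m:ℝ)*((q:ℝ)*β) by push_cast; ring, e_add]
      ring
    rw [hsum]
    refine (norm_add_le _ _).trans ?_
    rw [norm_mul]
    have htail : ‖∑ i ∈ Finset.range r, f (q*M+i) * e (((q*M+i : ℕ):ℝ)*β)‖
        ≤ ((q:ℝ)-1) := by
      calc ‖∑ i ∈ Finset.range r, f (q*M+i) * e (((q*M+i : ℕ):ℝ)*β)‖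
          ≤ ∑ i ∈ Finset.range r, ‖f (q*M+i) * e (((q*M+i : ℕ):ℝ)*β)‖ :=
            norm_sum_le _ _
        _ = ∑ i ∈ Finset.range r, 1 := by
            apply Finset.sum_congr rfl; intro i _; rw [norm_mul, hmod, e_abs, mul_one]
        _ = (r:ℝ) := by simp
        _ ≤ ((q:ℝ)-1) := by
            have h10 : (r:ℝ) + 1 ≤ (q:ℝ) := by exact_mod_cast hr
            linarith
    linarith [htail]
  have he_cont : Continuous e := by
    show Continuous fun x : ℝ => Complex.exp (2*(Real.pi:ℂ)*Complex.I*(x:ℂ))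
    exact Complex.continuous_exp.comp (continuous_const.mul Complex.continuous_ofReal)
  have hgcont : Continuous g := by
    rw [hgdef]
    apply continuous_finset_sum
    intro a _
    exact continuous_const.mul (he_cont.comp (continuous_const.mul continuous_id))
  set h : ℝ → ℝ := fun β => ‖g β * g ((q:ℝ)*β)‖ with hhdef
  have hhcont : Continuous h :=
    continuous_norm.comp (hgcont.mul (hgcont.comp (continuous_const.mul continuous_id)))
  have hgshift : ∀ (β:ℝ) (m:ℤ), g (β + m) = g β := by
    intro β m
    rw [hgdef]
    apply Finset.sum_congr rfl
    intro a _
    congr 1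
    rw [show (a:ℝ) * (β + m) = (a:ℝ)*β + ((a*m : ℤ):ℝ) by push_cast; ring, e_add, e_int, mul_one]
  have hhshift : ∀ β:ℝ, h β = h (Int.fract β) := by
    intro β
    have h1 : g β = g (Int.fract β) := by
      conv_lhs => rw [show β = Int.fract β + ((⌊β⌋:ℤ):ℝ) by rw [Int.fract]; ring]
      exact hgshift _ _
    have h2 : g ((q:ℝ)*β) = g ((q:ℝ)*Int.fract β) := by
      conv_lhs => rw [show (q:ℝ)*β = (q:ℝ)*Int.fract β + (((q:ℤ)*⌊β⌋ : ℤ):ℝ) by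
        rw [Int.fract]; push_cast; ring]
      exact hgshift _ _
    simp only [hhdef, h1, h2]
  obtain ⟨α₀, hα₀mem, hmax⟩ := (isCompact_Icc (a:=(0:ℝ)) (b:=1)).exists_isMaxOn
    (Set.nonempty_Icc.mpr zero_le_one) hhcont.continuousOn
  have hmax' : ∀ β, h β ≤ h α₀ := by
    intro β
    rw [hhshift β]
    exact hmax (Set.mem_Icc.mpr ⟨Int.fract_nonneg β, (Int.fract_lt_one β).le⟩)
  have hhub : h α₀ ≤ (q:ℝ)^2 := by
    have : h α₀ = ‖g α₀‖ * ‖g ((q:ℝ)*α₀)‖ := by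
      rw [hhdef]; exact norm_mul _ _
    rw [this, sq]
    exact mul_le_mul (habsg _) (habsg _) (norm_nonneg _) hqR0.le
  by_cases hcase : h α₀ = (q:ℝ)^2
  · left
    have hprod : ‖g α₀‖ * ‖g ((q:ℝ)*α₀)‖ = (q:ℝ)^2 := by
      rw [← norm_mul]; exact hcase
    have hga : ‖g α₀‖ = (q:ℝ) := by
      by_contra hne
      have hlt : ‖g α₀‖ < q := lt_of_le_of_ne (habsg _) hne
      have h2 := habsg ((q:ℝ)*α₀)
      nlinarith [norm_nonneg (g ((q:ℝ)*α₀)),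
        norm_nonneg (g α₀), hprod]
    have hgb : ‖g ((q:ℝ)*α₀)‖ = (q:ℝ) := by
      by_contra hne
      have hlt : ‖g ((q:ℝ)*α₀)‖ < q := lt_of_le_of_ne (habsg _) hne
      nlinarith [norm_nonneg (g ((q:ℝ)*α₀)),
        norm_nonneg (g α₀), hprod]
    have h1 := align q hq0 (fun a => f a * e ((a:ℝ)*α₀))
      (fun a _ => by rw [norm_mul, hmod, e_abs, mul_one])
      (by simp [hf0]; exact e_zero)
      (by rw [show (∑ a ∈ Finset.range q, f a * e ((a:ℝ)*α₀)) = g α₀ from by rw [hgdef]]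
          exact hga)
    have h2 := align q hq0 (fun a => f a * e ((a:ℝ)*((q:ℝ)*α₀)))
      (fun a _ => by rw [norm_mul, hmod, e_abs, mul_one])
      (by simp [hf0]; exact e_zero)
      (by rw [show (∑ a ∈ Finset.range q, f a * e ((a:ℝ)*((q:ℝ)*α₀))) = g ((q:ℝ)*α₀) from by
            rw [hgdef]]
          exact hgb)
    have e1 : f 1 * e α₀ = 1 := by
      have := h1 1 (by omega); simpa using this
    have e2 : f 1 * e ((q:ℝ)*α₀) = 1 := by
      have := h2 1 (by omega); simpa using this
    have heq12 : e α₀ = e ((q:ℝ)*α₀) := mul_left_cancel₀ (hne0 1) (e1.trans e2.symm)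
    have hee : e ((q:ℝ)*α₀ - α₀) = 1 := by
      have h3 : e ((q:ℝ)*α₀) = e ((q:ℝ)*α₀ - α₀) * e α₀ := by
        rw [← e_add]; ring_nf
      have h4 : e ((q:ℝ)*α₀) = 1 * e α₀ := by rw [one_mul, heq12]
      have := h3.symm.trans h4
      exact mul_right_cancel₀ (e_ne_zero α₀) this
    obtain ⟨k, hk⟩ := (e_eq_one_iff _).1 hee
    obtain ⟨hα₀0, hα₀1⟩ := Set.mem_Icc.mp hα₀mem
    have hk0 : 0 ≤ k := by
      have : (0:ℝ) ≤ (k:ℝ) := by rw [← hk]; nlinarith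
      exact_mod_cast this
    have hkq : k ≤ (q:ℤ) - 1 := by
      have hR : (k:ℝ) ≤ (q:ℝ)-1 := by rw [← hk]; nlinarith
      have hh : ((k:ℤ):ℝ) ≤ (((q:ℤ) - 1 : ℤ):ℝ) := by push_cast; linarith
      exact_mod_cast hh
    set k' := k.toNat with hk'
    have hk'le : k' ≤ q - 1 := by omega
    have hq1ne : (q:ℝ) - 1 ≠ 0 := by linarith
    have hα₀eq : α₀ = (k':ℝ)/((q:ℝ)-1) := by
      have hkR : ((q:ℝ)-1)*α₀ = (k':ℝ) := by
        have : (k':ℝ) = (k:ℝ) := by exact_mod_cast congrArg (Int.cast : ℤ → ℝ) (Int.toNat_of_nonneg hk0)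
        rw [this, ← hk]; ring
      field_simp [← hkR]
      linarith [hkR]
    refine ⟨if k' = 0 then 0 else q - 1 - k', ?_, ?_⟩
    · split <;> omega
    set p := if k' = 0 then 0 else q-1-k' with hp
    have hdvd : ∃ d:ℕ, p + k' = (q-1)*d := by
      by_cases h0 : k' = 0
      · exact ⟨0, by simp [hp, h0]⟩
      · refine ⟨1, ?_⟩
        rw [hp]
        simp only [h0, if_false]
        omega
    have hfa : ∀ a, a < q → f a = e ((a:ℝ)*(p:ℝ)/((q:ℝ)-1)) := by
      intro a ha
      have hz := h1 a ha
      have hinv : e ((a:ℝ)*(p:ℝ)/((q:ℝ)-1)) * e ((a:ℝ)*α₀) = 1 := by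
        rw [← e_add, e_eq_one_iff]
        obtain ⟨d, hd⟩ := hdvd
        refine ⟨((a*d : ℕ) : ℤ), ?_⟩
        have hdR : (p:ℝ) + (k':ℝ) = ((q:ℝ)-1)*(d:ℝ) := by
          have := congrArg (fun n : ℕ => (n:ℝ)) hd
          push_cast [Nat.cast_sub (by omega : 1 ≤ q)] at this
          linarith [this]
        rw [hα₀eq]
        push_cast
        field_simp
        nlinarith [hdR]
      have := mul_right_cancel₀ (e_ne_zero ((a:ℝ)*α₀)) (hz.trans hinv.symm)
      exact this
    intro n
    induction n using Nat.strong_induction_on with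
    | _ n ih =>
      rcases Nat.eq_zero_or_pos n with h0 | hpos
      · subst h0
        rw [hf0]
        simp [e_zero]
      · obtain ⟨j, r, hjr, hrq, hjlt⟩ : ∃ j r, n = q*j + r ∧ r < q ∧ j < n :=
          ⟨n/q, n%q, (Nat.div_add_mod n q).symm, Nat.mod_lt _ hq0, Nat.div_lt_self hpos (by omega)⟩
        have step : f n = f r * f j := by rw [hjr]; exact hsplit r j hrq
        rw [step, ih j hjlt, hfa r hrq, ← e_add]
        refine (e_congr ((j * p : ℕ) : ℤ) ?_).symm
        have hcast : (n:ℝ) = (q:ℝ)*(j:ℝ) + (r:ℝ) := by exact_mod_cast hjr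
        push_cast
        field_simp
        linear_combination (p:ℝ) * hcast
  · right
    have hq2 : (0:ℝ) < (q:ℝ)^2 := by positivity
    have hh0 : 0 ≤ h α₀ := by rw [hhdef]; exact norm_nonneg _
    set D := h α₀ / (q:ℝ)^2 with hD
    have hD0 : 0 ≤ D := div_nonneg hh0 hq2.le
    have hDlt : D < 1 := (div_lt_one hq2).mpr (lt_of_le_of_ne hhub hcase)
    have h1D : (0:ℝ) < 1 + D := by linarith
    have hratio : (1:ℝ) < 2/(1+D) := by rw [lt_div_iff₀ h1D]; linarith
    set c := (1/2) * Real.logb q (2/(1+D)) with hc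
    have hlogpos := Real.logb_pos hq1R hratio
    have hc0 : 0 < c := by rw [hc]; linarith
    have hcle : c ≤ 1/2 := by
      have h2le : 2/(1+D) ≤ (q:ℝ) := by
        have h2a : 2/(1+D) ≤ 2 := by rw [div_le_iff₀ h1D]; nlinarith
        have h2R : (2:ℝ) ≤ (q:ℝ) := by exact_mod_cast hq
        linarith
      have h2q : Real.logb q (2/(1+D)) ≤ 1 := by
        have := Real.logb_le_logb_of_le hq1R (by positivity : (0:ℝ) < 2/(1+D)) h2le
        rwa [Real.logb_self_eq_one hq1R] at this
      rw [hc]; linarith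
    have h1c : (0:ℝ) ≤ 1 - c := by linarith
    have hqc : (q:ℝ) ^ (2*c) = 2/(1+D) := by
      rw [hc, show 2*((1/2:ℝ)*Real.logb q (2/(1+D))) = Real.logb q (2/(1+D)) by ring]
      exact Real.rpow_logb hqR0 (ne_of_gt hq1R) (by positivity)
    set E := (1 - D)/(1 + D) with hE
    have hE0 : 0 < E := div_pos (by linarith) h1D
    set C := (q:ℝ)^2 + (q:ℝ)^2/E with hC
    have hC0 : 0 < C := by positivity
    have hCq : (q:ℝ)^2 ≤ C := by
      have : 0 ≤ (q:ℝ)^2/E := by positivity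
      rw [hC]; linarith
    refine ⟨c, hc0, C, hC0, ?_⟩
    clear_value D c E C
    have hgg : ∀ β, ‖g β‖ * ‖g ((q:ℝ)*β)‖ ≤ (q:ℝ)^2 * D := by
      intro β
      have h5 := hmax' β
      have h6 : h β = ‖g β‖ * ‖g ((q:ℝ)*β)‖ := by
        rw [hhdef]; exact norm_mul _ _
      have h7 : (q:ℝ)^2 * D = h α₀ := by
        rw [hD]; field_simp
      rw [h7, ← h6]; exact h5
    have key : ∀ N : ℕ, ∀ α : ℝ, 1 ≤ N →
        ‖∑ n ∈ Finset.range N, f n * e ((n:ℝ)*α)‖ ≤ C * (N:ℝ)^((1:ℝ)-c) := by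
      intro N
      induction N using Nat.strong_induction_on with
      | _ N ih =>
        intro α hN
        have hX1 : (1:ℝ) ≤ ((N:ℝ))^((1:ℝ)-c) :=
          Real.one_le_rpow (by exact_mod_cast hN) h1c
        set M := N / q / q with hM
        have hrec1 := hrec N α
        have hrec2 := hrec (N/q) ((q:ℝ)*α)
        rw [← hM] at hrec2
        set T := ‖∑ m ∈ Finset.range M, f m * e ((m:ℝ)*((q:ℝ)*((q:ℝ)*α)))‖ with hT
        have hT0 : 0 ≤ T := norm_nonneg _
        have hq1' : (0:ℝ) ≤ (q:ℝ) - 1 := by linarith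
        have hcomb : ‖∑ n ∈ Finset.range N, f n * e ((n:ℝ)*α)‖ ≤
            (q:ℝ)^2 * D * T + ((q:ℝ)^2 - 1) := by
          have hga0 : 0 ≤ ‖g α‖ := norm_nonneg _
          calc ‖∑ n ∈ Finset.range N, f n * e ((n:ℝ)*α)‖
              ≤ ‖g α‖ *
                  ‖∑ m ∈ Finset.range (N/q), f m * e ((m:ℝ)*((q:ℝ)*α))‖
                + ((q:ℝ)-1) := hrec1
            _ ≤ ‖g α‖ * (‖g ((q:ℝ)*α)‖ * T + ((q:ℝ)-1)) + ((q:ℝ)-1) := by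
                have := mul_le_mul_of_nonneg_left hrec2 hga0
                linarith
            _ = (‖g α‖ * ‖g ((q:ℝ)*α)‖) * T
                + ‖g α‖ * ((q:ℝ)-1) + ((q:ℝ)-1) := by ring
            _ ≤ (q:ℝ)^2 * D * T + (q:ℝ)*((q:ℝ)-1) + ((q:ℝ)-1) := by
                have ha := mul_le_mul_of_nonneg_right (hgg α) hT0
                have hb := mul_le_mul_of_nonneg_right (habsg α) hq1'
                linarith
            _ = (q:ℝ)^2 * D * T + ((q:ℝ)^2 - 1) := by ring
        by_cases hM0 : M = 0
        · have hTz : T = 0 := by rw [hT, hM0]; simp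
          calc ‖∑ n ∈ Finset.range N, f n * e ((n:ℝ)*α)‖
              ≤ (q:ℝ)^2 * D * T + ((q:ℝ)^2 - 1) := hcomb
            _ ≤ C := by rw [hTz]; rw [mul_zero, zero_add]; linarith
            _ ≤ C * ((N:ℝ))^((1:ℝ)-c) := le_mul_of_one_le_right hC0.le hX1
        · have hMpos : 1 ≤ M := Nat.one_le_iff_ne_zero.mpr hM0
          have hMN : M < N := by
            calc M ≤ N / q := Nat.div_le_self _ _
              _ < N := Nat.div_lt_self (by omega) (by omega)
          have hTb : T ≤ C * ((M:ℝ))^((1:ℝ)-c) := ih M hMN ((q:ℝ)*((q:ℝ)*α)) hMpos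
          have hMle : (M:ℝ) ≤ (N:ℝ)/(q:ℝ)^2 := by
            have h1 : M = N/(q*q) := by rw [hM, Nat.div_div_eq_div_mul]
            calc (M:ℝ) = ((N/(q*q) : ℕ):ℝ) := by rw [h1]
              _ ≤ (N:ℝ)/((q*q : ℕ):ℝ) := Nat.cast_div_le
              _ = (N:ℝ)/(q:ℝ)^2 := by push_cast; ring_nf
          have hMrpow : ((M:ℝ))^((1:ℝ)-c) ≤ ((N:ℝ))^((1:ℝ)-c) * ((q:ℝ)^(2*c)) / (q:ℝ)^2 := by
            have hr1 : ((M:ℝ))^((1:ℝ)-c) ≤ ((N:ℝ)/(q:ℝ)^2)^((1:ℝ)-c) :=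
              Real.rpow_le_rpow (Nat.cast_nonneg M) hMle h1c
            have hr2 : ((N:ℝ)/(q:ℝ)^2)^((1:ℝ)-c)
                = ((N:ℝ))^((1:ℝ)-c) / ((q:ℝ)^2)^((1:ℝ)-c) :=
              Real.div_rpow (Nat.cast_nonneg N) hq2.le _
            have hr3 : ((q:ℝ)^2)^((1:ℝ)-c) = (q:ℝ)^2 / (q:ℝ)^(2*c) := by
              rw [← Real.rpow_natCast (q:ℝ) 2, ← Real.rpow_mul hqR0.le,
                ← Real.rpow_sub hqR0]
              norm_num
              ring_nf
            rw [hr2, hr3] at hr1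
            calc ((M:ℝ))^((1:ℝ)-c) ≤ ((N:ℝ))^((1:ℝ)-c) / ((q:ℝ)^2 / (q:ℝ)^(2*c)) := hr1
              _ = ((N:ℝ))^((1:ℝ)-c) * ((q:ℝ)^(2*c)) / (q:ℝ)^2 := by
                  rw [div_div_eq_mul_div]
          have hrpos : (0:ℝ) < (q:ℝ)^(2*c) := Real.rpow_pos_of_pos hqR0 _
          have hstep : (q:ℝ)^2 * D * (C * ((M:ℝ))^((1:ℝ)-c))
              ≤ (2*D/(1+D)) * (C * ((N:ℝ))^((1:ℝ)-c)) := by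
            have h8 : C * ((M:ℝ))^((1:ℝ)-c)
                ≤ C * (((N:ℝ))^((1:ℝ)-c) * ((q:ℝ)^(2*c)) / (q:ℝ)^2) :=
              mul_le_mul_of_nonneg_left hMrpow hC0.le
            have h9 := mul_le_mul_of_nonneg_left h8
              (mul_nonneg (by positivity) hD0 : (0:ℝ) ≤ (q:ℝ)^2 * D)
            calc (q:ℝ)^2 * D * (C * ((M:ℝ))^((1:ℝ)-c))
                ≤ (q:ℝ)^2 * D * (C * (((N:ℝ))^((1:ℝ)-c) * ((q:ℝ)^(2*c)) / (q:ℝ)^2)) := h9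
              _ = D * ((q:ℝ)^(2*c)) * (C * ((N:ℝ))^((1:ℝ)-c)) := by
                  field_simp
              _ = (2*D/(1+D)) * (C * ((N:ℝ))^((1:ℝ)-c)) := by
                  rw [hqc]; ring
          have h4 : 1 - 2*D/(1+D) = E := by rw [hE]; field_simp; ring
          have hECb : E * C = (q:ℝ)^2*E + (q:ℝ)^2 := by
            rw [hC]; field_simp
            try ring
          have h5 : (q:ℝ)^2 ≤ E * (C * ((N:ℝ))^((1:ℝ)-c)) := by
            have hEC : (q:ℝ)^2 ≤ E*C := by nlinarith [hECb, mul_pos hq2 hE0]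
            have : E*C ≤ E*(C * ((N:ℝ))^((1:ℝ)-c)) :=
              mul_le_mul_of_nonneg_left (le_mul_of_one_le_right hC0.le hX1) hE0.le
            linarith
          have h6 : E*(C * ((N:ℝ))^((1:ℝ)-c)) = C * ((N:ℝ))^((1:ℝ)-c)
              - (2*D/(1+D))*(C * ((N:ℝ))^((1:ℝ)-c)) := by
            rw [← h4]; ring
          calc ‖∑ n ∈ Finset.range N, f n * e ((n:ℝ)*α)‖
              ≤ (q:ℝ)^2 * D * T + ((q:ℝ)^2 - 1) := hcomb
            _ ≤ (q:ℝ)^2 * D * (C * ((M:ℝ))^((1:ℝ)-c)) + ((q:ℝ)^2 - 1) := by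
                have := mul_le_mul_of_nonneg_left hTb (mul_nonneg (by positivity) hD0 : (0:ℝ) ≤ (q:ℝ)^2 * D)
                linarith
            _ ≤ (2*D/(1+D)) * (C * ((N:ℝ))^((1:ℝ)-c)) + ((q:ℝ)^2 - 1) := by linarith
            _ ≤ C * ((N:ℝ))^((1:ℝ)-c) := by linarith [h5, h6]
    intro N hN α
    exact key N α hN
end

section
/- For every integer s ≥ 2 there exists a constant C ≥ 1 such that for every integer N ≥ 1 and every f : ℕ → ℂ with |f(n)| = 1 for all n, one has (1/C)·(1 − Re D) ≤ 1 − ‖f‖_{U^s[N]}^{2^s} ≤ C·(1 − Re D), where D := E_{(e₀,…,e_s) ∈ [0,N)^{s+1} with e₀+⋯+e_s < N} ∏_{ω ∈ {0,1}^s} C^{|ω|} f(e₀ + ω₁e₁ + ⋯ + ω_s e_s), i.e. the average of the indicated product over all (s+1)-tuples of nonnegative integers e₀,…,e_s, each less than N, whose sum is less than N. -/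
open Finset Complex

noncomputable section

/-- The vertex `e₀ + ω₁ e₁ + ⋯ + ω_s e_s` for a tuple of natural numbers. -/
def vertexN (s : ℕ) (en : Fin (s + 1) → ℕ) (ω : Fin s → Bool) : ℕ :=
  en 0 + ∑ i : Fin s, if ω i then en i.succ else 0

/-- The simplex of tuples `(e₀, …, e_s) ∈ [0,N)^{s+1}` with `e₀ + ⋯ + e_s < N`. -/
def simplexSet (s N : ℕ) : Finset (Fin (s + 1) → ℕ) :=
  (Fintype.piFinset fun _ : Fin (s + 1) => Finset.range N).filter fun en =>
    ∑ i, en i < N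

/-- The average `D` of the Gowers product over the simplex. -/
def simplexAvg (s N : ℕ) (f : ℕ → ℂ) : ℂ :=
  (∑ en ∈ simplexSet s N, ∏ ω : Fin s → Bool,
    (starRingEnd ℂ)^[wt ω] (f (vertexN s en ω))) / (simplexSet s N).card

end

-- vertex at false / single
lemma vertex_false (s : ℕ) (n : Fin (s+1) → ℤ) : vertex s n (fun _ => false) = n 0 := by
  simp [vertex]

lemma vertex_single (s : ℕ) (n : Fin (s+1) → ℤ) (j : Fin s) :
    vertex s n (fun i => decide (i = j)) = n 0 + n j.succ := by
  simp only [vertex]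
  congr 1
  rw [Finset.sum_congr rfl (g := fun i => if i = j then n i.succ else 0)
    (fun i _ => by by_cases h : i = j <;> simp [h])]
  simp

lemma mem_PiSet {s N : ℕ} {n : Fin (s+1) → ℤ} :
    n ∈ PiSet s N ↔ ∀ ω : Fin s → Bool, 0 ≤ vertex s n ω ∧ vertex s n ω < N := by
  constructor
  · exact fun h => (Finset.mem_filter.1 h).2
  · intro h
    refine Finset.mem_filter.2 ⟨Finset.mem_Icc.2 ⟨?_, ?_⟩, h⟩ <;> intro i <;>
      induction i using Fin.cases with
      | zero =>
        have := h (fun _ => false); rw [vertex_false] at this; simp; omega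
      | succ j =>
        have h1 := h (fun _ => false); rw [vertex_false] at h1
        have h2 := h (fun i => decide (i = j)); rw [vertex_single] at h2
        simp; omega

lemma mem_simplexSet_of_sum_lt {s N : ℕ} {m : Fin (s+1) → ℕ} (h : ∑ i, m i < N) :
    m ∈ simplexSet s N := by
  refine Finset.mem_filter.2 ⟨Fintype.mem_piFinset.2 fun i => Finset.mem_range.2 ?_, h⟩
  calc m i ≤ ∑ j, m j := Finset.single_le_sum (fun j _ => Nat.zero_le _) (Finset.mem_univ i)
    _ < N := h

lemma vertexN_le_sum {s : ℕ} (m : Fin (s+1) → ℕ) (ω : Fin s → Bool) :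
    vertexN s m ω ≤ ∑ i, m i := by
  rw [Fin.sum_univ_succ, vertexN]
  exact Nat.add_le_add_left (Finset.sum_le_sum fun i _ => by split <;> omega) _

lemma vertexN_cast {s : ℕ} (m : Fin (s+1) → ℕ) (ω : Fin s → Bool) :
    ((vertexN s m ω : ℤ)) = vertex s (fun i => (m i : ℤ)) ω := by
  simp only [vertexN, vertex]
  push_cast [apply_ite]
  rfl

noncomputable section
def gowersTermN (s : ℕ) (f : ℕ → ℂ) (m : Fin (s + 1) → ℕ) : ℂ :=
  ∏ ω : Fin s → Bool, (starRingEnd ℂ)^[wt ω] (f (vertexN s m ω))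
def eps (s : ℕ) (n : Fin (s+1) → ℤ) : Fin s → Bool := fun i => decide (n i.succ < 0)
def reflN (s : ℕ) (n : Fin (s+1) → ℤ) : Fin (s+1) → ℕ :=
  Fin.cases (vertex s n (eps s n)).toNat (fun i => (n i.succ).natAbs)
end

lemma conj_iter (m : ℕ) (z : ℂ) :
    (starRingEnd ℂ)^[m] z = if Even m then z else (starRingEnd ℂ) z := by
  induction m with
  | zero => simp
  | succ k ih =>
    rw [Function.iterate_succ_apply', ih]
    by_cases h : Even k <;> simp [h, Nat.even_add_one]

lemma conj_iter_re (m : ℕ) (z : ℂ) : ((starRingEnd ℂ)^[m] z).re = z.re := by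
  rw [conj_iter]; split <;> simp

lemma conj_iter_abs (m : ℕ) (z : ℂ) : ‖(starRingEnd ℂ)^[m] z‖ = ‖z‖ := by
  rw [conj_iter]; split <;> simp

lemma conj_iter_parity (m m' : ℕ) (h : m % 2 = m' % 2) (z : ℂ) :
    (starRingEnd ℂ)^[m] z = (starRingEnd ℂ)^[m'] z := by
  rw [conj_iter, conj_iter]
  have he : Even m ↔ Even m' := by rw [Nat.even_iff, Nat.even_iff, h]
  by_cases hm : Even m
  · rw [if_pos hm, if_pos (he.1 hm)]
  · rw [if_neg hm, if_neg (fun h' => hm (he.2 h'))]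

lemma bool_aux (a b : Bool) :
    ((if (a ^^ b) = true then (1:ℕ) else 0) + 2 * if (a && b) = true then 1 else 0) =
      (if a = true then 1 else 0) + if b = true then 1 else 0 := by
  cases a <;> cases b <;> rfl

lemma wt_xor {s : ℕ} (ω ε : Fin s → Bool) :
    (wt (fun i => xor (ω i) (ε i)) + 2 * (Finset.univ.filter fun i => (ω i && ε i) = true).card)
      = wt ω + wt ε := by
  simp only [wt, Finset.card_filter, ← Finset.sum_add_distrib, Finset.mul_sum]
  exact Finset.sum_congr rfl fun i _ => bool_aux (ω i) (ε i)

lemma wt_xor_parity {s : ℕ} (ω ε : Fin s → Bool) :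
    wt (fun i => xor (ω i) (ε i)) % 2 = (wt ω + wt ε) % 2 := by
  have := wt_xor ω ε; omega

lemma refl_aux (a : ℤ) (w : Bool) :
    ((if decide (a < 0) then a else 0) + if w then (a.natAbs : ℤ) else 0)
      = if xor w (decide (a < 0)) then a else 0 := by
  rcases lt_or_ge a 0 with h | h
  · have hd : decide (a < 0) = true := decide_eq_true h
    have hab : (a.natAbs : ℤ) = -a := by omega
    cases w <;> simp [hd, hab] <;> omega
  · have hd : decide (a < 0) = false := decide_eq_false (not_lt.2 h)
    have hab : (a.natAbs : ℤ) = a := by omega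
    cases w <;> simp [hd, hab]

lemma vertexN_reflN {s N : ℕ} {n : Fin (s+1) → ℤ}
    (hn : ∀ ω : Fin s → Bool, 0 ≤ vertex s n ω ∧ vertex s n ω < N) (ω : Fin s → Bool) :
    ((vertexN s (reflN s n) ω : ℤ)) = vertex s n (fun i => xor (ω i) (eps s n i)) := by
  have h0 : ((reflN s n 0 : ℤ)) = vertex s n (eps s n) := by
    simp only [reflN, Fin.cases_zero]
    exact Int.toNat_of_nonneg (hn (eps s n)).1
  simp only [vertexN]
  push_cast [apply_ite]
  have hsucc : ∀ i : Fin s, ((reflN s n i.succ : ℤ)) = ((n i.succ).natAbs : ℤ) := by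
    intro i; simp [reflN]
  calc ((reflN s n 0 : ℤ)) + ∑ i : Fin s, (if ω i then ((reflN s n i.succ : ℤ)) else 0)
      = vertex s n (eps s n) + ∑ i : Fin s, (if ω i then ((n i.succ).natAbs : ℤ) else 0) := by
        rw [h0]; simp only [hsucc]
    _ = n 0 + ∑ i : Fin s, ((if eps s n i then n i.succ else 0)
          + if ω i then ((n i.succ).natAbs : ℤ) else 0) := by
        rw [vertex, Finset.sum_add_distrib]; ring
    _ = n 0 + ∑ i : Fin s, (if xor (ω i) (eps s n i) then n i.succ else 0) := by
        congr 1; exact Finset.sum_congr rfl fun i _ => refl_aux (n i.succ) (ω i)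
    _ = _ := rfl

lemma reflN_mem {s N : ℕ} {n : Fin (s+1) → ℤ}
    (hn : ∀ ω : Fin s → Bool, 0 ≤ vertex s n ω ∧ vertex s n ω < N) :
    reflN s n ∈ simplexSet s N := by
  apply mem_simplexSet_of_sum_lt
  have hsum : ∑ i, reflN s n i = vertexN s (reflN s n) (fun _ => true) := by
    rw [vertexN, Fin.sum_univ_succ]; simp
  have := vertexN_reflN (N := N) hn (fun _ => true)
  have h2 := (hn (fun i => xor true (eps s n i))).2
  rw [← this] at h2
  rw [hsum]
  exact_mod_cast h2

lemma vertexN_reflN_toNat {s N : ℕ} {n : Fin (s+1) → ℤ}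
    (hn : ∀ ω : Fin s → Bool, 0 ≤ vertex s n ω ∧ vertex s n ω < N) (ω : Fin s → Bool) :
    vertexN s (reflN s n) ω = (vertex s n (fun i => xor (ω i) (eps s n i))).toNat := by
  have := vertexN_reflN (N := N) hn ω
  omega

lemma xor_invol {s : ℕ} (ε : Fin s → Bool) :
    Function.Involutive (fun (ω : Fin s → Bool) => fun i => xor (ω i) (ε i)) := by
  intro ω; funext i; simp [Bool.xor_assoc]

lemma gowersTermN_reflN {s N : ℕ} (f : ℕ → ℂ) {n : Fin (s+1) → ℤ}
    (hn : ∀ ω : Fin s → Bool, 0 ≤ vertex s n ω ∧ vertex s n ω < N) :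
    gowersTermN s f (reflN s n) = (starRingEnd ℂ)^[wt (eps s n)] (gowersTerm s f n) := by
  set ε := eps s n with hε
  have hre : gowersTermN s f (reflN s n)
      = ∏ ω : Fin s → Bool, (starRingEnd ℂ)^[wt (fun i => xor (ω i) (ε i))]
          (f (vertex s n ω).toNat) := by
    rw [gowersTermN]
    refine Fintype.prod_bijective (fun (ω : Fin s → Bool) => fun i => xor (ω i) (ε i))
      ((xor_invol ε).bijective) _ _ (fun x => ?_)
    have hσσ : (fun i => xor (xor (x i) (ε i)) (ε i)) = x := by
      funext i; simp [Bool.xor_assoc]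
    rw [vertexN_reflN_toNat hn x]
    simp only [hσσ]
    rfl
  rw [hre, Finset.prod_congr rfl (fun (ω : Fin s → Bool) _ =>
    ((Function.iterate_add_apply _ (wt ε) (wt ω) _).symm.trans
      (conj_iter_parity _ _ (by have := wt_xor_parity ω ε; omega) _).symm).symm)]
  by_cases hev : Even (wt ε)
  · simp only [conj_iter (wt ε), if_pos hev, gowersTerm]
  · simp only [conj_iter (wt ε), if_neg hev, gowersTerm, map_prod]

lemma re_gowersTermN_reflN {s N : ℕ} (f : ℕ → ℂ) {n : Fin (s+1) → ℤ}
    (hn : ∀ ω : Fin s → Bool, 0 ≤ vertex s n ω ∧ vertex s n ω < N) :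
    (gowersTermN s f (reflN s n)).re = (gowersTerm s f n).re := by
  rw [gowersTermN_reflN f hn, conj_iter_re]

lemma int_eq_of_natAbs {a b : ℤ} (h : a.natAbs = b.natAbs) (h2 : a < 0 ↔ b < 0) :
    a = b := by
  by_cases h3 : a < 0
  · have h4 : b < 0 := h2.1 h3
    omega
  · have h4 : ¬ b < 0 := fun hb => h3 (h2.2 hb)
    omega

lemma reflN_fiber_card {s N : ℕ} (m : Fin (s+1) → ℕ) :
    ((PiSet s N).filter fun n => reflN s n = m).card ≤ 2 ^ s := by
  have h2 : (Finset.univ : Finset (Fin s → Bool)).card = 2 ^ s := by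
    simp [Fintype.card_fun]
  rw [← h2]
  apply Finset.card_le_card_of_injOn (fun n => eps s n) (fun _ _ => Finset.mem_univ _)
  intro n₁ hn₁ n₂ hn₂ hee
  simp only [Finset.coe_filter, Set.mem_setOf_eq] at hn₁ hn₂
  obtain ⟨hp₁, hr₁⟩ := hn₁
  obtain ⟨hp₂, hr₂⟩ := hn₂
  have hv₁ := mem_PiSet.1 hp₁
  have hv₂ := mem_PiSet.1 hp₂
  have hsucc : ∀ i : Fin s, n₁ i.succ = n₂ i.succ := by
    intro i
    have ha : (n₁ i.succ).natAbs = (n₂ i.succ).natAbs := by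
      have e1 : reflN s n₁ i.succ = (n₁ i.succ).natAbs := by simp [reflN]
      have e2 : reflN s n₂ i.succ = (n₂ i.succ).natAbs := by simp [reflN]
      rw [← e1, ← e2, hr₁, hr₂]
    have hb : n₁ i.succ < 0 ↔ n₂ i.succ < 0 := by
      have := congrFun hee i
      simp only [eps, decide_eq_decide] at this
      exact this
    exact int_eq_of_natAbs ha hb
  have h0 : n₁ 0 = n₂ 0 := by
    have e1 : reflN s n₁ 0 = (vertex s n₁ (eps s n₁)).toNat := by simp [reflN]
    have e2 : reflN s n₂ 0 = (vertex s n₂ (eps s n₂)).toNat := by simp [reflN]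
    have hv : (vertex s n₁ (eps s n₁)).toNat = (vertex s n₂ (eps s n₂)).toNat := by
      rw [← e1, ← e2, hr₁, hr₂]
    have hnn₁ := (hv₁ (eps s n₁)).1
    have hnn₂ := (hv₂ (eps s n₂)).1
    have hveq : vertex s n₁ (eps s n₁) = vertex s n₂ (eps s n₂) := by omega
    have hsum : ∑ i : Fin s, (if eps s n₁ i then n₁ i.succ else 0)
        = ∑ i : Fin s, (if eps s n₂ i then n₂ i.succ else 0) := by
      apply Finset.sum_congr rfl
      intro i _
      have heps : eps s n₁ = eps s n₂ := hee
      rw [hsucc i, congrFun heps i]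
    rw [vertex, vertex, hsum] at hveq
    omega
  funext i
  induction i using Fin.cases with
  | zero => exact h0
  | succ j => exact hsucc j

lemma toInt_mem_PiSet {s N : ℕ} {m : Fin (s+1) → ℕ} (hm : m ∈ simplexSet s N) :
    (fun i => (m i : ℤ)) ∈ PiSet s N := by
  have hsum : ∑ i, m i < N := (Finset.mem_filter.1 hm).2
  rw [mem_PiSet]
  intro ω
  rw [← vertexN_cast]
  constructor
  · positivity
  · exact_mod_cast lt_of_le_of_lt (vertexN_le_sum m ω) hsum

lemma gowersTerm_toInt (s : ℕ) (f : ℕ → ℂ) (m : Fin (s+1) → ℕ) :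
    gowersTerm s f (fun i => (m i : ℤ)) = gowersTermN s f m := by
  rw [gowersTerm, gowersTermN]
  apply Finset.prod_congr rfl
  intro ω _
  rw [← vertexN_cast, Int.toNat_natCast]

lemma toInt_injective (s : ℕ) :
    Function.Injective (fun (m : Fin (s+1) → ℕ) => fun i => (m i : ℤ)) := by
  intro a b h
  funext i
  have := congrFun h i
  simpa using this

lemma abs_gowersTermN_le (s : ℕ) (f : ℕ → ℂ) (hf : ∀ n, ‖f n‖ = 1)
    (m : Fin (s+1) → ℕ) : ‖gowersTermN s f m‖ = 1 := by
  rw [gowersTermN, norm_prod]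
  refine Finset.prod_eq_one fun ω _ => ?_
  rw [conj_iter_abs, hf]

lemma abs_gowersTerm_le (s : ℕ) (f : ℕ → ℂ) (hf : ∀ n, ‖f n‖ = 1)
    (n : Fin (s+1) → ℤ) : ‖gowersTerm s f n‖ = 1 := by
  rw [gowersTerm, norm_prod]
  refine Finset.prod_eq_one fun ω _ => ?_
  rw [conj_iter_abs, hf]

lemma termN_re_le_one (s : ℕ) (f : ℕ → ℂ) (hf : ∀ n, ‖f n‖ = 1)
    (m : Fin (s+1) → ℕ) : (gowersTermN s f m).re ≤ 1 := by
  calc (gowersTermN s f m).re ≤ ‖gowersTermN s f m‖ := Complex.re_le_norm _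
    _ = 1 := abs_gowersTermN_le s f hf m

lemma term_re_le_one (s : ℕ) (f : ℕ → ℂ) (hf : ∀ n, ‖f n‖ = 1)
    (n : Fin (s+1) → ℤ) : (gowersTerm s f n).re ≤ 1 := by
  calc (gowersTerm s f n).re ≤ ‖gowersTerm s f n‖ := Complex.re_le_norm _
    _ = 1 := abs_gowersTerm_le s f hf n

lemma term_re_ge (s : ℕ) (f : ℕ → ℂ) (hf : ∀ n, ‖f n‖ = 1)
    (n : Fin (s+1) → ℤ) : -1 ≤ (gowersTerm s f n).re := by
  have h1 : -(gowersTerm s f n).re ≤ ‖gowersTerm s f n‖ :=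
    (neg_le_abs _).trans (Complex.abs_re_le_norm _)
  rw [abs_gowersTerm_le s f hf n] at h1
  linarith

lemma termN_re_ge (s : ℕ) (f : ℕ → ℂ) (hf : ∀ n, ‖f n‖ = 1)
    (m : Fin (s+1) → ℕ) : -1 ≤ (gowersTermN s f m).re := by
  have h1 : -(gowersTermN s f m).re ≤ ‖gowersTermN s f m‖ :=
    (neg_le_abs _).trans (Complex.abs_re_le_norm _)
  rw [abs_gowersTermN_le s f hf m] at h1
  linarith

lemma sum_upper (s N : ℕ) (f : ℕ → ℂ) (hf : ∀ n, ‖f n‖ = 1) :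
    ∑ n ∈ PiSet s N, (1 - (gowersTerm s f n).re)
      ≤ 2 ^ s * ∑ m ∈ simplexSet s N, (1 - (gowersTermN s f m).re) := by
  have hg0 : ∀ m : Fin (s+1) → ℕ, 0 ≤ 1 - (gowersTermN s f m).re := fun m => by
    have := termN_re_le_one s f hf m; linarith
  have step1 : ∑ n ∈ PiSet s N, (1 - (gowersTerm s f n).re)
      = ∑ n ∈ PiSet s N, (1 - (gowersTermN s f (reflN s n)).re) := by
    apply Finset.sum_congr rfl
    intro n hn
    rw [re_gowersTermN_reflN f (mem_PiSet.1 hn)]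
  rw [step1, Finset.sum_comp (fun m => 1 - (gowersTermN s f m).re) (reflN s)]
  have step2 : ∑ m ∈ (PiSet s N).image (reflN s),
      ((PiSet s N).filter (fun n => reflN s n = m)).card • (1 - (gowersTermN s f m).re)
      ≤ ∑ m ∈ (PiSet s N).image (reflN s), 2 ^ s * (1 - (gowersTermN s f m).re) := by
    apply Finset.sum_le_sum
    intro m _
    rw [nsmul_eq_mul]
    apply mul_le_mul_of_nonneg_right _ (hg0 m)
    exact_mod_cast reflN_fiber_card m
  refine step2.trans ?_
  rw [← Finset.mul_sum]
  apply mul_le_mul_of_nonneg_left _ (by positivity)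
  apply Finset.sum_le_sum_of_subset_of_nonneg
  · intro m hm
    obtain ⟨n, hn, rfl⟩ := Finset.mem_image.1 hm
    exact reflN_mem (mem_PiSet.1 hn)
  · intro m _ _
    exact hg0 m

lemma sum_lower (s N : ℕ) (f : ℕ → ℂ) (hf : ∀ n, ‖f n‖ = 1) :
    ∑ m ∈ simplexSet s N, (1 - (gowersTermN s f m).re)
      ≤ ∑ n ∈ PiSet s N, (1 - (gowersTerm s f n).re) := by
  have h1 : ∑ m ∈ simplexSet s N, (1 - (gowersTermN s f m).re)
      = ∑ n ∈ (simplexSet s N).image (fun m => fun i => ((m i : ℤ))),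
          (1 - (gowersTerm s f n).re) := by
    rw [Finset.sum_image (fun a _ b _ h => toInt_injective s h)]
    apply Finset.sum_congr rfl
    intro m _
    rw [gowersTerm_toInt]
  rw [h1]
  apply Finset.sum_le_sum_of_subset_of_nonneg
  · intro x hx
    obtain ⟨m, hm, rfl⟩ := Finset.mem_image.1 hx
    exact toInt_mem_PiSet hm
  · intro n _ _
    have := term_re_le_one s f hf n; linarith

lemma card_simplex_le (s N : ℕ) : (simplexSet s N).card ≤ (PiSet s N).card :=
  Finset.card_le_card_of_injOn (fun m => fun i => ((m i : ℤ)))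
    (fun m hm => toInt_mem_PiSet hm) (fun a _ b _ h => toInt_injective s h)

lemma card_PiSet_le (s N : ℕ) : (PiSet s N).card ≤ (2 * N + 1) ^ (s + 1) := by
  calc (PiSet s N).card ≤ (Finset.Icc (fun _ : Fin (s+1) => -(N:ℤ)) fun _ => (N:ℤ)).card :=
        Finset.card_le_card (Finset.filter_subset _ _)
    _ = (2 * N + 1) ^ (s + 1) := by
        rw [Pi.card_Icc]
        simp only [Int.card_Icc]
        rw [Finset.prod_const]
        congr 1
        · omega
        · simp

lemma card_simplex_pos (s N : ℕ) (hN : 1 ≤ N) : 0 < (simplexSet s N).card := by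
  apply Finset.card_pos.2
  exact ⟨fun _ => 0, mem_simplexSet_of_sum_lt (by simp; omega)⟩

lemma box_subset_simplex (s N : ℕ) (k : ℕ) (hk : (s+1) * k ≤ N) :
    (Fintype.piFinset fun _ : Fin (s+1) => Finset.range k) ⊆ simplexSet s N := by
  intro m hm
  rcases Nat.eq_zero_or_pos k with rfl | hk1
  · simp only [Finset.range_zero] at hm
    exact absurd (Fintype.mem_piFinset.1 hm 0) (by simp)
  apply mem_simplexSet_of_sum_lt
  have : ∀ i, m i ≤ k - 1 := fun i => by
    have := Finset.mem_range.1 (Fintype.mem_piFinset.1 hm i); omega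
  calc ∑ i, m i ≤ ∑ _i : Fin (s+1), (k-1) := Finset.sum_le_sum fun i _ => this i
    _ = (s+1) * (k-1) := by rw [Finset.sum_const]; simp [Finset.card_univ, mul_comm]
    _ < N := by
      obtain ⟨k', rfl⟩ : ∃ k', k = k' + 1 := ⟨k - 1, by omega⟩
      simp only [Nat.add_sub_cancel]
      have he : (s+1) * (k' + 1) = (s+1) * k' + (s+1) := by ring
      calc (s+1) * k' < (s+1) * k' + (s+1) := by omega
        _ = (s+1) * (k'+1) := he.symm
        _ ≤ N := hk

lemma main_count (s N : ℕ) (hN : 1 ≤ N) :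
    (PiSet s N).card ≤ (6 * (s+1)) ^ (s+1) * (simplexSet s N).card := by
  obtain ⟨k, hk⟩ : ∃ k, N / (s+1) = k := ⟨_, rfl⟩
  have hdm : (s+1) * k + N % (s+1) = N := by rw [← hk]; exact Nat.div_add_mod N (s+1)
  have hmod : N % (s+1) < s+1 := Nat.mod_lt _ (by omega)
  have hP3N : (PiSet s N).card ≤ (3 * N) ^ (s+1) := by
    refine (card_PiSet_le s N).trans (Nat.pow_le_pow_left (by omega) _)
  rcases Nat.eq_zero_or_pos k with hk0 | hk1
  · have hNs : N ≤ s := by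
      have := (Nat.div_eq_zero_iff (b := s+1)).1 (hk.trans hk0)
      omega
    have h1 : 0 < (simplexSet s N).card := card_simplex_pos s N hN
    calc (PiSet s N).card ≤ (3 * N) ^ (s+1) := hP3N
      _ ≤ (6 * (s+1)) ^ (s+1) := Nat.pow_le_pow_left (by omega) _
      _ ≤ (6 * (s+1)) ^ (s+1) * (simplexSet s N).card := Nat.le_mul_of_pos_right _ h1
  · have h1 : s + 1 ≤ (s+1) * k := Nat.le_mul_of_pos_right _ hk1
    have h2 : N ≤ 2 * ((s+1) * k) := by linarith
    have h3N : 3 * N ≤ 6 * (s+1) * k := by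
      calc 3 * N ≤ 6 * ((s+1) * k) := by linarith
        _ = 6 * (s+1) * k := by ring
    have hbox : k ^ (s+1) ≤ (simplexSet s N).card := by
      calc k ^ (s+1) = (Fintype.piFinset fun _ : Fin (s+1) => Finset.range k).card := by
            rw [Fintype.card_piFinset]; simp
        _ ≤ (simplexSet s N).card :=
            Finset.card_le_card (box_subset_simplex s N k
              (by rw [mul_comm]; exact hk ▸ Nat.div_mul_le_self N (s+1)))
    calc (PiSet s N).card ≤ (3 * N) ^ (s+1) := hP3N
      _ ≤ (6 * (s+1) * k) ^ (s+1) := Nat.pow_le_pow_left h3N _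
      _ = (6 * (s+1)) ^ (s+1) * k ^ (s+1) := by rw [mul_pow]
      _ ≤ (6 * (s+1)) ^ (s+1) * (simplexSet s N).card :=
            Nat.mul_le_mul_left _ hbox


set_option maxHeartbeats 1000000 in
/-- `1 - ‖f‖_{U^s[N]}^{2^s}` is comparable to `1 - Re D`, where `D`
is the average of the Gowers product over the simplex `e₀ + ⋯ + e_s < N`. -/
theorem stmt16 (s : ℕ) (hs : 2 ≤ s) :
    ∃ C : ℝ, 1 ≤ C ∧ ∀ N : ℕ, 1 ≤ N → ∀ f : ℕ → ℂ, (∀ n, ‖f n‖ = 1) →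
      (1 / C) * (1 - (simplexAvg s N f).re) ≤ 1 - gowersNorm s N f ^ (2 ^ s) ∧
      1 - gowersNorm s N f ^ (2 ^ s) ≤ C * (1 - (simplexAvg s N f).re) := by
  have h2s : (0:ℝ) < 2 ^ s := by positivity
  have hpi := Real.pi_pos
  set c0 : ℝ := Real.cos ((1 / 2 ^ s : ℝ) * Real.pi) with hc0
  have h2sge : (2:ℝ) ≤ 2 ^ s := by
    calc (2:ℝ) = 2^1 := (pow_one 2).symm
      _ ≤ 2^s := pow_le_pow_right₀ (by norm_num) (by omega)
  have hfrac : (1 / 2 ^ s : ℝ) ≤ 1/2 := by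
    apply div_le_div_of_nonneg_left (by norm_num) (by norm_num) h2sge
  have hfracpos : (0:ℝ) < 1 / 2 ^ s := by positivity
  have hc0nonneg : 0 ≤ c0 := by
    apply Real.cos_nonneg_of_mem_Icc
    constructor
    · nlinarith
    · nlinarith
  have hc0lt1 : c0 < 1 := by
    refine lt_of_le_of_ne (Real.cos_le_one _) fun h => ?_
    have hx1 : -(2 * Real.pi) < (1 / 2 ^ s : ℝ) * Real.pi := by nlinarith
    have hx2 : (1 / 2 ^ s : ℝ) * Real.pi < 2 * Real.pi := by nlinarith
    have := (Real.cos_eq_one_iff_of_lt_of_lt hx1 hx2).1 h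
    nlinarith
  set δ : ℝ := 1 - c0 ^ (2 ^ s) with hδd
  have hδpos : 0 < δ := by
    have : c0 ^ (2^s) < 1 := pow_lt_one₀ hc0nonneg hc0lt1 (by positivity)
    simp only [hδd]; linarith
  set C : ℝ := max (max ((6*((s:ℝ)+1))^(s+1)) (2^s)) (2/δ) with hCdef
  have hs6 : (1:ℝ) ≤ 6*((s:ℝ)+1) := by
    have : (0:ℝ) ≤ (s:ℝ) := Nat.cast_nonneg s
    nlinarith
  have hM1 : (1:ℝ) ≤ (6*((s:ℝ)+1))^(s+1) := by
    calc (1:ℝ) = 1^(s+1) := (one_pow _).symm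
      _ ≤ (6*((s:ℝ)+1))^(s+1) := pow_le_pow_left₀ zero_le_one hs6 _
  have hCM : (6*((s:ℝ)+1))^(s+1) ≤ C := le_trans (le_max_left _ _) (le_max_left _ _)
  have hC2s : (2:ℝ)^s ≤ C := le_trans (le_max_right _ _) (le_max_left _ _)
  have hC2δ : 2/δ ≤ C := le_max_right _ _
  have hC1 : (1:ℝ) ≤ C := le_trans hM1 hCM
  have hC0 : (0:ℝ) < C := lt_of_lt_of_le one_pos hC1
  refine ⟨C, hC1, ?_⟩
  intro N hN f hf
  have hS0 : 0 < (simplexSet s N).card := card_simplex_pos s N hN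
  have hSPn : (simplexSet s N).card ≤ (PiSet s N).card := card_simplex_le s N
  set a := ∑ n ∈ PiSet s N, (1 - (gowersTerm s f n).re) with had
  set b := ∑ m ∈ simplexSet s N, (1 - (gowersTermN s f m).re) with hbd
  set P : ℝ := ((PiSet s N).card : ℝ) with hPd
  set S' : ℝ := ((simplexSet s N).card : ℝ) with hSd
  have hSpos : (0:ℝ) < S' := by simp only [hSd]; exact_mod_cast hS0
  have hPpos : (0:ℝ) < P := by
    simp only [hPd]; exact_mod_cast lt_of_lt_of_le hS0 hSPn
  have hSP : S' ≤ P := by simp only [hSd, hPd]; exact_mod_cast hSPn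
  have hPC : P ≤ C * S' := by
    have h1 : P ≤ ((6*((s:ℝ)+1))^(s+1)) * S' := by
      have := main_count s N hN
      simp only [hPd, hSd]
      exact_mod_cast this
    calc P ≤ ((6*((s:ℝ)+1))^(s+1)) * S' := h1
      _ ≤ C * S' := mul_le_mul_of_nonneg_right hCM hSpos.le
  have hb0 : 0 ≤ b := Finset.sum_nonneg fun m _ => by
    have := termN_re_le_one s f hf m; linarith
  have hba : b ≤ a := sum_lower s N f hf
  have ha0 : 0 ≤ a := le_trans hb0 hba
  have hab : a ≤ 2^s * b := sum_upper s N f hf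
  have ha2 : a ≤ 2 * P := by
    have h1 : a ≤ ∑ _n ∈ PiSet s N, (2:ℝ) := Finset.sum_le_sum fun n _ => by
      have := term_re_ge s f hf n; linarith
    rw [Finset.sum_const, nsmul_eq_mul] at h1
    simp only [hPd]; linarith
  -- averages
  have hyre : 1 - (gowersAvg s N f).re = a / P := by
    have h1 : (gowersAvg s N f).re = (∑ n ∈ PiSet s N, gowersTerm s f n).re / P := by
      rw [gowersAvg]
      have h2 : (((PiSet s N).card : ℕ) : ℂ) = ((P : ℝ) : ℂ) := by
        simp [hPd]
      rw [h2, Complex.div_ofReal_re]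
    have h3 : a = P - (∑ n ∈ PiSet s N, gowersTerm s f n).re := by
      rw [had, Finset.sum_sub_distrib, Finset.sum_const, nsmul_eq_mul, mul_one,
        Complex.re_sum, hPd]
    rw [h1, h3]
    field_simp
  have hDre : 1 - (simplexAvg s N f).re = b / S' := by
    have h1 : (simplexAvg s N f).re
        = (∑ m ∈ simplexSet s N, gowersTermN s f m).re / S' := by
      rw [simplexAvg]
      have h2 : (((simplexSet s N).card : ℕ) : ℂ) = ((S' : ℝ) : ℂ) := by
        simp [hSd]
      rw [h2, Complex.div_ofReal_re]
      rfl
    have h3 : b = S' - (∑ m ∈ simplexSet s N, gowersTermN s f m).re := by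
      rw [hbd, Finset.sum_sub_distrib, Finset.sum_const, nsmul_eq_mul, mul_one,
        Complex.re_sum, hSd]
    rw [h1, h3]
    field_simp
  rw [hDre]
  set y : ℝ := (gowersAvg s N f).re with hyd
  by_cases hy : 0 ≤ y
  · have hpow : gowersNorm s N f ^ (2^s) = y := by
      rw [gowersNorm, ← hyd, ← Real.rpow_natCast (y ^ ((1:ℝ)/2^s)) (2^s),
        ← Real.rpow_mul hy]
      have h1 : ((2 ^ s : ℕ) : ℝ) = 2 ^ s := by push_cast; ring
      rw [h1, one_div, inv_mul_cancel₀ (ne_of_gt h2s), Real.rpow_one]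
    rw [hpow]
    have hgoal : 1 - y = a / P := hyre
    rw [hgoal]
    constructor
    · rw [div_mul_div_comm, one_mul, div_le_div_iff₀ (mul_pos hC0 hSpos) hPpos]
      calc b * P ≤ a * P := mul_le_mul_of_nonneg_right hba hPpos.le
        _ ≤ a * (C * S') := mul_le_mul_of_nonneg_left hPC ha0
    · rw [← mul_div_assoc, div_le_div_iff₀ hPpos hSpos]
      calc a * S' ≤ (2^s * b) * S' := mul_le_mul_of_nonneg_right hab hSpos.le
        _ ≤ (C * b) * P :=
          mul_le_mul (mul_le_mul_of_nonneg_right hC2s hb0) hSP hSpos.le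
            (mul_nonneg hC0.le hb0)
  · push_neg at hy
    have hpow : gowersNorm s N f ^ (2^s) = (-y) * c0^(2^s) := by
      rw [gowersNorm, ← hyd, Real.rpow_def_of_neg hy, mul_pow, ← Real.exp_nat_mul]
      congr 1
      have h1 : ((2^s : ℕ):ℝ) * (Real.log y * (1/2^s)) = Real.log y := by
        push_cast; field_simp
      rw [h1, show Real.log y = Real.log (-y) by rw [Real.log_neg_eq_log]]
      exact Real.exp_log (by linarith)
    rw [hpow]
    have hmy1 : -y ≤ 1 := by
      have h1 : a / P ≤ 2 := by rw [div_le_iff₀ hPpos]; linarith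
      rw [← hyre] at h1
      linarith
    have hD2 : b / S' ≤ 2 := by
      have hb2 : b ≤ 2 * S' := by
        have h1 : b ≤ ∑ _m ∈ simplexSet s N, (2:ℝ) := Finset.sum_le_sum fun m _ => by
          have h2 : -1 ≤ (gowersTermN s f m).re := termN_re_ge s f hf m
          linarith
        rw [Finset.sum_const, nsmul_eq_mul] at h1
        simp only [hSd]; linarith
      rw [div_le_iff₀ hSpos]; linarith
    have hDlow : 1/2^s ≤ b / S' := by
      have hPa : P ≤ a := by
        have h1 : (1:ℝ) ≤ a / P := by rw [← hyre]; linarith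
        rw [le_div_iff₀ hPpos] at h1; linarith
      rw [div_le_div_iff₀ h2s hSpos]
      have : S' ≤ 2^s * b := by
        calc S' ≤ P := hSP
          _ ≤ a := hPa
          _ ≤ 2^s * b := hab
      linarith
    have hc0p : (0:ℝ) ≤ c0^(2^s) := pow_nonneg hc0nonneg _
    have hc0le : c0^(2^s) ≤ 1 := pow_le_one₀ hc0nonneg hc0lt1.le
    constructor
    · have hr : δ ≤ 1 - (-y) * c0^(2^s) := by
        have : (-y) * c0^(2^s) ≤ c0^(2^s) := by nlinarith
        simp only [hδd]; linarith
      have hl : (1/C) * (b/S') ≤ δ := by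
        have h1 : 1/C ≤ δ/2 := by
          rw [div_le_div_iff₀ hC0 (by norm_num)]
          have h2 : 2/δ ≤ C := hC2δ
          rw [div_le_iff₀ hδpos] at h2
          linarith
        calc (1/C) * (b/S') ≤ (δ/2) * (b/S') :=
              mul_le_mul_of_nonneg_right h1 (div_nonneg hb0 hSpos.le)
          _ ≤ (δ/2) * 2 := mul_le_mul_of_nonneg_left hD2 (by linarith)
          _ = δ := by ring
      linarith
    · have hL1 : 1 - (-y) * c0^(2^s) ≤ 1 := by nlinarith
      have hR1 : 1 ≤ C * (b/S') := by
        calc (1:ℝ) = 2^s * (1/2^s) := by field_simp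
          _ ≤ 2^s * (b/S') := mul_le_mul_of_nonneg_left hDlow h2s.le
          _ ≤ C * (b/S') := mul_le_mul_of_nonneg_right hC2s (div_nonneg hb0 hSpos.le)
      linarith
end

section
/- For every integer q ≥ 2 there exists a constant C > 0 such that for every q-multiplicative sequence f : ℕ → ℂ with |f(n)| = 1 for all n, and every integer r ≥ 1, the limit γ_r := lim_{N→∞} (1/N)·∑_{n=0}^{N−1} f(n+r)·conj(f(n)) exists, and for every integer N ≥ 2, |(1/N)·∑_{n=0}^{N−1} f(n+r)·conj(f(n)) − γ_r| ≤ C·r·(log N)/N. -/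
open Finset Complex

section aux
variable {q : ℕ} {f : ℕ → ℂ}

noncomputable def corS (f : ℕ → ℂ) (r N : ℕ) : ℂ :=
  ∑ n ∈ Finset.range N, f (n + r) * (starRingEnd ℂ) (f n)

lemma term_abs (habs : ∀ n, ‖f n‖ = 1) (n r : ℕ) :
    ‖f (n + r) * (starRingEnd ℂ) (f n)‖ = 1 := by
  rw [norm_mul, Complex.norm_conj, habs, habs, mul_one]

lemma mul_conj_one (habs : ∀ n, ‖f n‖ = 1) (n : ℕ) :
    f n * (starRingEnd ℂ) (f n) = 1 := by
  rw [Complex.mul_conj]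
  norm_cast
  rw [Complex.normSq_eq_norm_sq, habs]; norm_num

lemma block_lemma (hf : QMult q f) (habs : ∀ n, ‖f n‖ = 1)
    (A L t r : ℕ) (hA : q ^ t ∣ A) (hL : L ≤ q ^ t) :
    ‖∑ u ∈ range L,
      (f (A + u + r) * (starRingEnd ℂ) (f (A + u)) - f (u + r) * (starRingEnd ℂ) (f u))‖
      ≤ 2 * r := by
  set D : ℕ → ℂ := fun u =>
    f (A + u + r) * (starRingEnd ℂ) (f (A + u)) - f (u + r) * (starRingEnd ℂ) (f u) with hD
  have step1 : ‖∑ u ∈ range L, D u‖ ≤ ∑ u ∈ range L, ‖D u‖ :=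
    norm_sum_le _ _
  have step2 : ∑ u ∈ range L, ‖D u‖
      ≤ ∑ u ∈ range L, (if q ^ t ≤ u + r then (2 : ℝ) else 0) := by
    refine Finset.sum_le_sum fun u hu => ?_
    by_cases h : q ^ t ≤ u + r
    · rw [if_pos h]
      refine le_trans (norm_sub_le _ _) ?_
      rw [term_abs habs, term_abs habs]; norm_num
    · rw [if_neg h]
      push_neg at h
      have hu1 : u < q ^ t := lt_of_lt_of_le (Finset.mem_range.mp hu) hL
      have h1 : f (A + u + r) = f (u + r) * f A := by
        have he : A + u + r = (u + r) + A := by ring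
        rw [he]; exact hf t (u + r) A h hA
      have h2 : f (A + u) = f u * f A := by
        rw [add_comm A u]; exact hf t u A hu1 hA
      have h3 := mul_conj_one habs (n := A)
      have hz : D u = 0 := by
        rw [hD]
        simp only [h1, h2, map_mul]
        linear_combination (f (u + r) * (starRingEnd ℂ) (f u)) * h3
      rw [hz, norm_zero]
  have step3 : ∑ u ∈ range L, (if q ^ t ≤ u + r then (2 : ℝ) else 0)
      = 2 * (((range L).filter fun u => q ^ t ≤ u + r).card : ℝ) := by
    rw [Finset.sum_ite, Finset.sum_const, Finset.sum_const_zero, add_zero,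
      nsmul_eq_mul, mul_comm]
  have step4 : (((range L).filter fun u => q ^ t ≤ u + r).card : ℝ) ≤ (r : ℝ) := by
    have hsub : ((range L).filter fun u => q ^ t ≤ u + r) ⊆
        Finset.Ico (q ^ t - r) (q ^ t) := by
      intro u hu
      simp only [Finset.mem_filter, Finset.mem_range] at hu
      simp only [Finset.mem_Ico]
      omega
    have hc := Finset.card_le_card hsub
    rw [Nat.card_Ico] at hc
    exact_mod_cast le_trans hc (by omega)
  calc ‖∑ u ∈ range L, D u‖
      ≤ ∑ u ∈ range L, ‖D u‖ := step1
    _ ≤ _ := step2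
    _ = _ := step3
    _ ≤ 2 * r := by linarith

end aux

section aux2
variable {q : ℕ} {f : ℕ → ℂ}

lemma corS_add (f : ℕ → ℂ) (r M L : ℕ) :
    corS f r (M + L) = corS f r M
      + ∑ u ∈ range L, f (M + u + r) * (starRingEnd ℂ) (f (M + u)) := by
  unfold corS
  rw [Finset.sum_range_add]


lemma multiples_lemma (hf : QMult q f) (habs : ∀ n, ‖f n‖ = 1)
    (r t : ℕ) : ∀ d : ℕ,
    ‖corS f r (d * q ^ t) - d * corS f r (q ^ t)‖ ≤ 2 * r * d := by
  intro d
  induction d with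
  | zero => simp [corS]
  | succ d ih =>
    have hsplit := corS_add f r (d * q ^ t) (q ^ t)
    have hblock := block_lemma hf habs (d * q ^ t) (q ^ t) t r (dvd_mul_left _ _) le_rfl
    have hsum : ∑ u ∈ range (q ^ t),
        (f (d * q ^ t + u + r) * (starRingEnd ℂ) (f (d * q ^ t + u))
          - f (u + r) * (starRingEnd ℂ) (f u))
        = (∑ u ∈ range (q ^ t), f (d * q ^ t + u + r) * (starRingEnd ℂ) (f (d * q ^ t + u)))
          - corS f r (q ^ t) := by
      rw [Finset.sum_sub_distrib]; rfl
    rw [hsum] at hblock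
    have heq : corS f r ((d + 1) * q ^ t) - ((d : ℂ) + 1) * corS f r (q ^ t)
        = (corS f r (d * q ^ t) - (d : ℂ) * corS f r (q ^ t))
          + ((∑ u ∈ range (q ^ t), f (d * q ^ t + u + r) * (starRingEnd ℂ) (f (d * q ^ t + u)))
            - corS f r (q ^ t)) := by
      have : (d + 1) * q ^ t = d * q ^ t + q ^ t := by ring
      rw [this, hsplit]; ring
    have := norm_add_le
      (corS f r (d * q ^ t) - (d : ℂ) * corS f r (q ^ t))
      ((∑ u ∈ range (q ^ t), f (d * q ^ t + u + r) * (starRingEnd ℂ) (f (d * q ^ t + u)))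
        - corS f r (q ^ t))
    push_cast
    rw [heq]
    push_cast at ih ⊢
    calc _ ≤ _ := this
      _ ≤ 2 * r * d + 2 * r := by linarith
      _ ≤ 2 * r * (d + 1) := by ring_nf; linarith

end aux2

section aux3
variable {q : ℕ} {f : ℕ → ℂ}

lemma gamma_exists (hq : 2 ≤ q) (hf : QMult q f) (habs : ∀ n, ‖f n‖ = 1)
    (r : ℕ) : ∃ γ : ℂ,
      Filter.Tendsto (fun t : ℕ => corS f r (q ^ t) / (q ^ t : ℂ)) Filter.atTop (nhds γ) ∧
      ∀ t : ℕ, ‖corS f r (q ^ t) - (q ^ t : ℂ) * γ‖ ≤ 4 * r := by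
  have hq0 : (0 : ℝ) < q := by positivity
  have hqpow : ∀ t : ℕ, (0 : ℝ) < (q : ℝ) ^ t := fun t => by positivity
  set c : ℕ → ℂ := fun t => corS f r (q ^ t) / (q ^ t : ℂ) with hc
  have hrate : ∀ t : ℕ, dist (c t) (c (t + 1)) ≤ (2 * r) * (1 / q) ^ t := by
    intro t
    have hmul := multiples_lemma hf habs r t q
    have hqq : q * q ^ t = q ^ (t + 1) := by ring
    rw [hqq] at hmul
    have hne : ((q : ℂ) ^ t) ≠ 0 := by
      norm_cast; positivity
    have hne1 : ((q : ℂ) ^ (t + 1)) ≠ 0 := by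
      norm_cast; positivity
    have hdiff : c t - c (t + 1)
        = -(corS f r (q ^ (t + 1)) - (q : ℂ) * corS f r (q ^ t)) / (q ^ (t + 1) : ℂ) := by
      rw [hc]
      field_simp
      push_cast
      ring
    rw [dist_eq, hdiff, norm_div, norm_neg]
    have habs2 : ‖(q : ℂ) ^ (t + 1)‖ = (q : ℝ) ^ (t + 1) := by
      rw [norm_pow, Complex.norm_natCast]
    rw [habs2]
    rw [div_le_iff₀ (hqpow (t + 1))]
    push_cast at hmul
    calc ‖corS f r (q ^ (t + 1)) - (q : ℂ) * corS f r (q ^ t)‖ ≤ 2 * r * q := hmul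
      _ ≤ 2 * r * (1 / q) ^ t * q ^ (t + 1) := by
          have : (1 / (q : ℝ)) ^ t * (q : ℝ) ^ (t + 1) = q := by
            rw [div_pow, one_pow, pow_succ]
            field_simp
          rw [mul_assoc (2 * (r : ℝ)), this]
  have hr1 : (1 : ℝ) / q < 1 := by
    rw [div_lt_one hq0]; exact_mod_cast lt_of_lt_of_le one_lt_two hq
  have hcauchy : CauchySeq c := cauchySeq_of_le_geometric _ _ hr1 hrate
  obtain ⟨γ, hγ⟩ := cauchySeq_tendsto_of_complete hcauchy
  refine ⟨γ, hγ, fun t => ?_⟩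
  have hdist := dist_le_of_le_geometric_of_tendsto _ _ hr1 hrate hγ t
  have hfact : (2 * (r : ℝ)) * (1 / q) ^ t / (1 - 1 / q) ≤ 4 * r / q ^ t := by
    have h2 : (1 : ℝ) / 2 ≤ 1 - 1 / q := by
      have : (1 : ℝ) / q ≤ 1 / 2 := by
        apply div_le_div_of_nonneg_left (by norm_num) (by norm_num)
        exact_mod_cast hq
      linarith
    rw [div_le_div_iff₀ (by linarith) (hqpow t)]
    have hexp : (1 / (q : ℝ)) ^ t * (q : ℝ) ^ t = 1 := by
      rw [div_pow, one_pow]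
      field_simp
    have hrn : (0 : ℝ) ≤ r := Nat.cast_nonneg r
    nlinarith [hqpow t, pow_nonneg (le_of_lt (by positivity : (0:ℝ) < 1/(q:ℝ))) t]
  have habs3 : ‖corS f r (q ^ t) - (q ^ t : ℂ) * γ‖
      = (q : ℝ) ^ t * dist (c t) γ := by
    rw [dist_eq, hc]
    have hne : ((q : ℂ) ^ t) ≠ 0 := by norm_cast; positivity
    have : corS f r (q ^ t) - (q ^ t : ℂ) * γ
        = (q ^ t : ℂ) * (corS f r (q ^ t) / (q ^ t : ℂ) - γ) := by
      field_simp
    rw [this, norm_mul, norm_pow, Complex.norm_natCast]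
  rw [habs3]
  calc (q : ℝ) ^ t * dist (c t) γ
      ≤ (q : ℝ) ^ t * ((2 * r) * (1 / q) ^ t / (1 - 1 / q)) := by
        exact mul_le_mul_of_nonneg_left hdist (le_of_lt (hqpow t))
    _ ≤ (q : ℝ) ^ t * (4 * r / q ^ t) := mul_le_mul_of_nonneg_left hfact (le_of_lt (hqpow t))
    _ = 4 * r := by field_simp

end aux3

section aux4
variable {q : ℕ} {f : ℕ → ℂ}

lemma main_bound (hq : 2 ≤ q) (hf : QMult q f) (habs : ∀ n, ‖f n‖ = 1)
    (r : ℕ) (γ : ℂ)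
    (hγ : ∀ t : ℕ, ‖corS f r (q ^ t) - (q ^ t : ℂ) * γ‖ ≤ 4 * r) :
    ∀ N : ℕ, ‖corS f r N - (N : ℂ) * γ‖ ≤ 10 * q * r * (Nat.log q N + 1) := by
  intro N
  induction N using Nat.strong_induction_on with
  | _ N ih =>
  rcases Nat.eq_zero_or_pos N with h0 | hN
  · subst h0
    simp only [corS, Finset.range_zero, Finset.sum_empty, Nat.cast_zero, zero_mul, sub_zero,
      norm_zero]
    positivity
  · have hq1 : 1 < q := lt_of_lt_of_le one_lt_two hq
    set t := Nat.log q N with ht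
    set d := N / q ^ t with hd
    set N' := N % q ^ t with hN'
    have hqt_le : q ^ t ≤ N := Nat.pow_log_le_self q (by omega)
    have hlt : N < q ^ (t + 1) := Nat.lt_pow_succ_log_self hq1 N
    have hqtpos : 0 < q ^ t := Nat.pow_pos (by omega)
    have hdm : q ^ t * d + N' = N := Nat.div_add_mod N (q ^ t)
    have hN'lt : N' < q ^ t := Nat.mod_lt N hqtpos
    have hd1 : 1 ≤ d := (Nat.one_le_div_iff hqtpos).mpr hqt_le
    have hdq : d < q := by
      rw [hd, Nat.div_lt_iff_lt_mul hqtpos]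
      calc N < q ^ (t + 1) := hlt
        _ = q * q ^ t := by ring
    have hNsplit : N = d * q ^ t + N' := by rw [mul_comm d]; omega
    -- the block sum
    set B : ℂ := ∑ u ∈ range N', f (d * q ^ t + u + r) * (starRingEnd ℂ) (f (d * q ^ t + u))
      with hB
    have hcorN : corS f r N = corS f r (d * q ^ t) + B := by
      rw [hNsplit]; exact corS_add f r (d * q ^ t) N'
    have E1 : ‖corS f r (d * q ^ t) - (d : ℂ) * corS f r (q ^ t)‖ ≤ 2 * r * d :=
      multiples_lemma hf habs r t d
    have E2 : ‖corS f r (q ^ t) - (q ^ t : ℂ) * γ‖ ≤ 4 * r := hγ t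
    have E3 : ‖B - corS f r N'‖ ≤ 2 * r := by
      have := block_lemma hf habs (d * q ^ t) N' t r (dvd_mul_left _ _) (le_of_lt hN'lt)
      rwa [Finset.sum_sub_distrib] at this
    -- identity
    have key : corS f r N - (N : ℂ) * γ
        = (corS f r (d * q ^ t) - (d : ℂ) * corS f r (q ^ t))
          + (d : ℂ) * (corS f r (q ^ t) - (q ^ t : ℂ) * γ)
          + (B - corS f r N')
          + (corS f r N' - (N' : ℂ) * γ) := by
      have hNc : (N : ℂ) = (d : ℂ) * (q ^ t : ℂ) + (N' : ℂ) := by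
        rw [hNsplit]; push_cast; ring
      rw [hcorN, hNc]; ring
    have Eabs : ‖corS f r N - (N : ℂ) * γ‖
        ≤ 2 * r * d + d * (4 * r) + 2 * r
          + ‖corS f r N' - (N' : ℂ) * γ‖ := by
      rw [key]
      refine le_trans (norm_add_le _ _) ?_
      have h12 := norm_add_le
        ((corS f r (d * q ^ t) - (d : ℂ) * corS f r (q ^ t))
          + (d : ℂ) * (corS f r (q ^ t) - (q ^ t : ℂ) * γ)) (B - corS f r N')
      have h1 := norm_add_le
        (corS f r (d * q ^ t) - (d : ℂ) * corS f r (q ^ t))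
        ((d : ℂ) * (corS f r (q ^ t) - (q ^ t : ℂ) * γ))
      have hdabs : ‖(d : ℂ) * (corS f r (q ^ t) - (q ^ t : ℂ) * γ)‖
          = d * ‖corS f r (q ^ t) - (q ^ t : ℂ) * γ‖ := by
        rw [norm_mul, Complex.norm_natCast]
      have hd0 : (0 : ℝ) ≤ d := Nat.cast_nonneg d
      have := mul_le_mul_of_nonneg_left E2 hd0
      rw [hdabs] at h1
      linarith [norm_add_le
        ((corS f r (d * q ^ t) - (d : ℂ) * corS f r (q ^ t))
          + (d : ℂ) * (corS f r (q ^ t) - (q ^ t : ℂ) * γ) + (B - corS f r N'))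
        (corS f r N' - (N' : ℂ) * γ), h12, h1, E1, E3]
    -- final estimate, casework on N'
    have hdr : (d : ℝ) ≤ (q : ℝ) - 1 := by
      have : d ≤ q - 1 := by omega
      have h2 : (d : ℝ) ≤ ((q - 1 : ℕ) : ℝ) := by exact_mod_cast this
      rwa [Nat.cast_sub (by omega), Nat.cast_one] at h2
    have hr0 : (0 : ℝ) ≤ r := Nat.cast_nonneg r
    have hq0 : (2 : ℝ) ≤ q := by exact_mod_cast hq
    have ht0 : (0 : ℝ) ≤ t := Nat.cast_nonneg t
    have hA : (r : ℝ) * d ≤ r * ((q : ℝ) - 1) := mul_le_mul_of_nonneg_left hdr hr0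
    have hB2 : (0 : ℝ) ≤ (q : ℝ) * r * t := by positivity
    have hC : (0 : ℝ) ≤ (q : ℝ) * r := by positivity
    rcases Nat.eq_zero_or_pos N' with h0' | hN'pos
    · rw [h0'] at Eabs
      simp only [corS, Finset.range_zero, Finset.sum_empty, Nat.cast_zero, zero_mul, sub_zero,
        norm_zero] at Eabs
      have : ‖corS f r N - (N : ℂ) * γ‖ ≤ 2 * r * d + d * (4 * r) + 2 * r := by
        simpa [corS] using Eabs
      have hgoal : (2 : ℝ) * r * d + d * (4 * r) + 2 * r ≤ 10 * q * r * (t + 1) := by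
        nlinarith
      calc ‖corS f r N - (N : ℂ) * γ‖ ≤ _ := this
        _ ≤ 10 * q * r * (t + 1) := hgoal
        _ = 10 * q * r * (Nat.log q N + 1) := by rw [← ht]
    · have hN'N : N' < N := lt_of_lt_of_le hN'lt hqt_le
      have ihN' := ih N' hN'N
      have hlogN' : Nat.log q N' + 1 ≤ t :=
        Nat.log_lt_of_lt_pow (by omega) hN'lt
      have hlogN'r : (Nat.log q N' : ℝ) + 1 ≤ (t : ℝ) := by exact_mod_cast hlogN'
      have hq10 : (0 : ℝ) ≤ 10 * q * r := by positivity
      have ihN'2 : ‖corS f r N' - (N' : ℂ) * γ‖ ≤ 10 * q * r * t := by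
        calc ‖corS f r N' - (N' : ℂ) * γ‖
            ≤ 10 * q * r * (Nat.log q N' + 1) := ihN'
          _ ≤ 10 * q * r * t := mul_le_mul_of_nonneg_left hlogN'r hq10
      have hgoal : (2 : ℝ) * r * d + d * (4 * r) + 2 * r + 10 * q * r * t
          ≤ 10 * q * r * (t + 1) := by nlinarith [hA, hB2, hC, hr0]
      calc ‖corS f r N - (N : ℂ) * γ‖
          ≤ 2 * r * d + d * (4 * r) + 2 * r + ‖corS f r N' - (N' : ℂ) * γ‖ := Eabs
        _ ≤ 2 * r * d + d * (4 * r) + 2 * r + 10 * q * r * t := by linarith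
        _ ≤ 10 * q * r * (t + 1) := hgoal
        _ = 10 * q * r * (Nat.log q N + 1) := by rw [← ht]

end aux4

/-- The autocorrelation coefficients `γ_r` of a `q`-multiplicative
sequence exist, with rate of convergence `O(r log N / N)`. -/
theorem stmt18 (q : ℕ) (hq : 2 ≤ q) :
    ∃ C > (0 : ℝ), ∀ f : ℕ → ℂ, QMult q f → (∀ n, ‖f n‖ = 1) →
      ∀ r : ℕ, 1 ≤ r → ∃ γ : ℂ,
        Filter.Tendsto
          (fun N : ℕ => (∑ n ∈ Finset.range N, f (n + r) * (starRingEnd ℂ) (f n)) / N)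
          Filter.atTop (nhds γ) ∧
        ∀ N : ℕ, 2 ≤ N →
          ‖(∑ n ∈ Finset.range N, f (n + r) * (starRingEnd ℂ) (f n)) / N - γ‖
            ≤ C * r * Real.log N / N := by
  have hlog2 : (0 : ℝ) < Real.log 2 := Real.log_pos (by norm_num)
  have hqR : (0 : ℝ) < q := by positivity
  refine ⟨20 * q / Real.log 2, by positivity, fun f hf habs r hr => ?_⟩
  set C : ℝ := 20 * q / Real.log 2 with hC
  obtain ⟨γ, hγtend, hγbound⟩ := gamma_exists hq hf habs r
  have hmain := main_bound hq hf habs r γ hγbound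
  -- the quantitative bound
  have hbd : ∀ N : ℕ, 2 ≤ N →
      ‖corS f r N / N - γ‖ ≤ C * r * Real.log N / N := by
    intro N hN
    have hN0 : (0 : ℝ) < N := by positivity
    have hNc : ((N : ℂ)) ≠ 0 := by
      simp only [ne_eq, Nat.cast_eq_zero]; omega
    have hdiv : corS f r N / N - γ = (corS f r N - (N : ℂ) * γ) / N := by
      field_simp
    rw [hdiv, norm_div, Complex.norm_natCast]
    rw [div_le_div_iff₀ hN0 hN0]
    have hk := hmain N
    set k := Nat.log q N with hk'
    have h2k : ((2 : ℕ) : ℝ) ^ k ≤ (N : ℝ) := by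
      have h1 : (2 : ℕ) ^ k ≤ q ^ k := Nat.pow_le_pow_left hq k
      have h2 : q ^ k ≤ N := Nat.pow_log_le_self q (by omega)
      exact_mod_cast le_trans h1 h2
    have hlogk : (k : ℝ) * Real.log 2 ≤ Real.log N := by
      have := Real.log_le_log (by positivity) h2k
      rwa [Real.log_pow, Nat.cast_ofNat] at this
    have hlogN : Real.log 2 ≤ Real.log N := by
      apply Real.log_le_log (by norm_num)
      exact_mod_cast hN
    have hkey : 10 * (q : ℝ) * r * (k + 1) ≤ C * r * Real.log N := by
      have hk2 : (k : ℝ) + 1 ≤ 2 * Real.log N / Real.log 2 := by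
        rw [le_div_iff₀ hlog2]
        nlinarith
      have hpos : (0 : ℝ) ≤ 10 * (q : ℝ) * r := by positivity
      calc 10 * (q : ℝ) * r * (k + 1)
          ≤ 10 * (q : ℝ) * r * (2 * Real.log N / Real.log 2) :=
            mul_le_mul_of_nonneg_left hk2 hpos
        _ = C * r * Real.log N := by
            rw [hC]; field_simp; ring
      
    calc ‖corS f r N - (N : ℂ) * γ‖ * N
        ≤ (10 * q * r * (k + 1)) * N := by
          exact mul_le_mul_of_nonneg_right hk (le_of_lt hN0)
      _ ≤ (C * r * Real.log N) * N := mul_le_mul_of_nonneg_right hkey (le_of_lt hN0)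
  refine ⟨γ, ?_, hbd⟩
  -- Tendsto
  have hrate : Filter.Tendsto (fun N : ℕ => C * r * Real.log N / N) Filter.atTop (nhds 0) := by
    have h1 : Filter.Tendsto (fun x : ℝ => Real.log x / x) Filter.atTop (nhds 0) :=
      Real.isLittleO_log_id_atTop.tendsto_div_nhds_zero
    have h2 : Filter.Tendsto (fun N : ℕ => Real.log N / N) Filter.atTop (nhds 0) :=
      h1.comp tendsto_natCast_atTop_atTop
    have h3 := h2.const_mul (C * r)
    simp only [mul_zero] at h3
    refine h3.congr fun N => ?_
    rw [mul_div_assoc]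
  rw [tendsto_iff_dist_tendsto_zero]
  refine squeeze_zero' ?_ ?_ hrate
  · exact Filter.Eventually.of_forall fun N => dist_nonneg
  · filter_upwards [Filter.eventually_ge_atTop 2] with N hN
    rw [Complex.dist_eq]
    exact hbd N hN
end
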